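/- Fix an integer k ≥ 1 and assume sin(jθ) ≠ 0 for all integers 1 ≤ j ≤ 2k. Then the heavy ball's distance from the wall at every ball-wall collision of the Galperin billiard satisfies the lower bound |X_{2k}| ≥ √(m/M)·|x_0|, where θ = arctan(√(m/M)); i.e., the heavy ball never approaches the wall closer than √(m/M) times the light ball's initial distance. -/

import Mathlib

/-- Minimal-distance bound for the Galperin billiard: at every ball-wall
collision the heavy ball's distance from the wall satisfies
`|X_{2k}| ≥ √(m/M)·|x_0|`. -/
theorem galperin_minimal_distance_bound
    (M m : ℝ) (hM : 0 < M) (hm : 0 < m)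
    (θ : ℝ) (hθ : θ = Real.arctan (Real.sqrt (m / M)))
    (k : ℕ) (hk : 1 ≤ k)
    (hsin : ∀ j : ℕ, 1 ≤ j → j ≤ 2 * k → Real.sin ((j : ℝ) * θ) ≠ 0)
    (V v X x : ℕ → ℝ)
    (hV0 : 0 < V 0) (hv0 : v 0 = 0) (hX0x0 : X 0 < x 0) (hx0 : x 0 < 0)
    (hBBvel : ∀ l : ℕ,
      V (2 * l + 1) = ((M - m) * V (2 * l) + 2 * m * v (2 * l)) / (M + m) ∧
      v (2 * l + 1) = (2 * M * V (2 * l) + (m - M) * v (2 * l)) / (M + m))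
    (hBWvel : ∀ l : ℕ, 1 ≤ l →
      V (2 * l) = V (2 * l - 1) ∧ v (2 * l) = -v (2 * l - 1))
    (hBBpos : ∀ l : ℕ, 2 * l + 1 ≤ 2 * k →
      X (2 * l + 1)
        = X (2 * l) + (X (2 * l) - x (2 * l)) * V (2 * l) / (v (2 * l) - V (2 * l)) ∧
      x (2 * l + 1) = X (2 * l + 1))
    (hBWpos : ∀ l : ℕ, 1 ≤ l → 2 * l ≤ 2 * k →
      X (2 * l) = X (2 * l - 1) - (V (2 * l - 1) / v (2 * l - 1)) * x (2 * l - 1) ∧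
      x (2 * l) = 0) :
    Real.sqrt (m / M) * |x 0| ≤ |X (2 * k)| := by
  have hs0 : 0 < Real.sqrt (m / M) := Real.sqrt_pos.mpr (div_pos hm hM)
  set s : ℝ := Real.sqrt (m / M) with hsdef
  have hsne : s ≠ 0 := ne_of_gt hs0
  have hV0' : V 0 ≠ 0 := ne_of_gt hV0
  have hc0 : 0 < Real.cos θ := by
    rw [hθ]
    exact Real.cos_arctan_pos _
  set c : ℝ := Real.cos θ with hcdef
  set S : ℝ := Real.sin θ with hSdef
  have hcne : c ≠ 0 := ne_of_gt hc0
  have htan : Real.tan θ = s := by rw [hθ, Real.tan_arctan]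
  have hS : S = s * c := by
    rw [← htan, Real.tan_eq_sin_div_cos]
    field_simp [hSdef, hcdef]
    exact (mul_div_cancel_right₀ (Real.sin θ) hcne).symm
  have hpy : S ^ 2 + c ^ 2 = 1 := Real.sin_sq_add_cos_sq θ
  have h1s : (1 : ℝ) + s ^ 2 ≠ 0 := by positivity
  have hc2 : c ^ 2 = 1 / (1 + s ^ 2) := by
    rw [hS] at hpy
    field_simp
    nlinarith [hpy]
  have hmM : m = M * s ^ 2 := by
    rw [hsdef, Real.sq_sqrt (le_of_lt (div_pos hm hM))]
    field_simp
  have hMm : M + m ≠ 0 := by positivity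
  -- velocity step: ball-ball collision
  have hstep : ∀ l : ℕ,
      V (2 * l) = Real.cos (2 * l * θ) * V 0 →
      v (2 * l) = -(Real.sin (2 * l * θ) * V 0) / s →
      V (2 * l + 1) = Real.cos ((2 * l + 2) * θ) * V 0 ∧
      v (2 * l + 1) = Real.sin ((2 * l + 2) * θ) * V 0 / s := by
    intro l hVe hve
    obtain ⟨h1, h2⟩ := hBBvel l
    have hA : Real.cos ((2 * (l : ℝ) + 2) * θ)
        = Real.cos (2 * l * θ) * (2 * c ^ 2 - 1) - Real.sin (2 * l * θ) * (2 * s * c ^ 2) := by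
      have e : (2 * (l : ℝ) + 2) * θ = 2 * l * θ + 2 * θ := by ring
      rw [e, Real.cos_add, Real.cos_two_mul, Real.sin_two_mul, ← hcdef, ← hSdef, hS]
      ring
    have hB : Real.sin ((2 * (l : ℝ) + 2) * θ)
        = Real.sin (2 * l * θ) * (2 * c ^ 2 - 1) + Real.cos (2 * l * θ) * (2 * s * c ^ 2) := by
      have e : (2 * (l : ℝ) + 2) * θ = 2 * l * θ + 2 * θ := by ring
      rw [e, Real.sin_add, Real.cos_two_mul, Real.sin_two_mul, ← hcdef, ← hSdef, hS]
      ring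
    constructor
    · rw [h1, hVe, hve, hA, hc2, hmM]
      field_simp
      ring
    · rw [h2, hVe, hve, hB, hc2, hmM]
      field_simp
      ring
  -- even-index velocities
  have hvel : ∀ l : ℕ, V (2 * l) = Real.cos (2 * l * θ) * V 0 ∧
      v (2 * l) = -(Real.sin (2 * l * θ) * V 0) / s := by
    intro l
    induction l with
    | zero => simp [hv0]
    | succ n ih =>
      obtain ⟨h1, h2⟩ := hstep n ih.1 ih.2
      obtain ⟨hw1, hw2⟩ := hBWvel (n + 1) (by omega)
      have e : 2 * (n + 1) - 1 = 2 * n + 1 := by omega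
      rw [e] at hw1 hw2
      have eang : (2 * ((n : ℝ) + 1)) * θ = (2 * (n : ℝ) + 2) * θ := by ring
      constructor
      · rw [hw1, h1]
        push_cast
        rw [eang]
      · rw [hw2, h2]
        push_cast
        rw [eang]
        ring
  have hodd : ∀ l : ℕ, V (2 * l + 1) = Real.cos ((2 * l + 2) * θ) * V 0 ∧
      v (2 * l + 1) = Real.sin ((2 * l + 2) * θ) * V 0 / s :=
    fun l => hstep l (hvel l).1 (hvel l).2
  -- angle-sum facts
  have hsum1 : ∀ l : ℕ, Real.sin ((2 * l + 1) * θ)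
      = c * (Real.sin (2 * l * θ) + Real.cos (2 * l * θ) * s) := by
    intro l
    have e : (2 * (l : ℝ) + 1) * θ = 2 * l * θ + θ := by ring
    rw [e, Real.sin_add, ← hcdef, ← hSdef, hS]
    ring
  have hsum2 : ∀ l : ℕ, Real.sin ((2 * l + 1) * θ)
      = c * (Real.sin ((2 * l + 2) * θ) - Real.cos ((2 * l + 2) * θ) * s) := by
    intro l
    have e : (2 * (l : ℝ) + 1) * θ = (2 * l + 2) * θ - θ := by ring
    rw [e, Real.sin_sub, ← hcdef, ← hSdef, hS]
    ring
  -- sin ((2l+1)θ) ≠ 0 ⇒ B + A s ≠ 0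
  have hsumne : ∀ l : ℕ, 2 * l + 1 ≤ 2 * k →
      Real.sin (2 * l * θ) + Real.cos (2 * l * θ) * s ≠ 0 := by
    intro l hl h
    apply hsin (2 * l + 1) (by omega) (by omega)
    push_cast
    rw [hsum1 l, h, mul_zero]
  -- second half of a round: from the ball-ball collision position to the wall
  have hsecond : ∀ l : ℕ, 2 * l + 2 ≤ 2 * k →
      x (2 * l + 1) = X (2 * l + 1) →
      X (2 * l + 1) * (Real.sin (2 * l * θ) + Real.cos (2 * l * θ) * s) = x 0 * s →
      X (2 * l + 2) * Real.sin ((2 * l + 2) * θ) = x 0 * s := by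
    intro l hl hx1 hX1
    obtain ⟨hw, -⟩ := hBWpos (l + 1) (by omega) (by omega)
    have e : 2 * (l + 1) - 1 = 2 * l + 1 := by omega
    rw [e] at hw
    have e2 : 2 * (l + 1) = 2 * l + 2 := by omega
    rw [e2] at hw
    have hB2ne : Real.sin ((2 * (l : ℝ) + 2) * θ) ≠ 0 := by
      have := hsin (2 * l + 2) (by omega) (by omega)
      push_cast at this
      convert this using 2
    have hvne : v (2 * l + 1) ≠ 0 := by
      rw [(hodd l).2]
      exact div_ne_zero (mul_ne_zero hB2ne hV0') hsne
    have hbb : Real.sin ((2 * (l : ℝ) + 2) * θ) - Real.cos ((2 * (l : ℝ) + 2) * θ) * s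
        = Real.sin (2 * l * θ) + Real.cos (2 * l * θ) * s := by
      have h12 := (hsum1 l).symm.trans (hsum2 l)
      exact (mul_left_cancel₀ hcne h12).symm
    rw [hw, hx1, (hodd l).1, (hodd l).2]
    have hq : Real.cos ((2 * (l : ℝ) + 2) * θ) * V 0 / (Real.sin ((2 * (l : ℝ) + 2) * θ) * V 0 / s)
        * Real.sin ((2 * (l : ℝ) + 2) * θ) = Real.cos ((2 * (l : ℝ) + 2) * θ) * s := by
      field_simp
      exact mul_div_cancel_right₀ _ (by rw [show (2 * ((l : ℝ) + 1)) * θ = (2 * l + 2) * θ by ring]; exact hB2ne)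
    linear_combination hX1 + X (2 * l + 1) * hbb - X (2 * l + 1) * hq
  -- main position invariant
  have hpos : ∀ l : ℕ, 1 ≤ l → l ≤ k →
      X (2 * l) * Real.sin (2 * l * θ) = x 0 * s ∧ x (2 * l) = 0 := by
    intro l hl
    induction l, hl using Nat.le_induction with
    | base =>
      intro hlk
      -- X 1 = x 0
      obtain ⟨hX1, hx1⟩ := hBBpos 0 (by omega)
      simp only [Nat.mul_zero, Nat.zero_add] at hX1 hx1
      rw [hv0] at hX1
      have hX1' : X 1 = x 0 := by
        rw [hX1, zero_sub, div_neg, mul_div_assoc, div_self hV0', mul_one]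
        ring
      have h3 := hsecond 0 (by omega) hx1 (by
        rw [hX1']
        norm_num)
      refine ⟨?_, (hBWpos 1 (by omega) (by omega)).2⟩
      simpa using h3
    | succ n hn ih =>
      intro hnk
      obtain ⟨hIH, hx2n⟩ := ih (by omega)
      -- first half: ball-ball collision
      obtain ⟨hX', hx'⟩ := hBBpos n (by omega)
      have hne := hsumne n (by omega)
      have hD : v (2 * n) - V (2 * n)
          = -(V 0 * (Real.sin (2 * (n : ℝ) * θ) + Real.cos (2 * (n : ℝ) * θ) * s)) / s := by
        rw [(hvel n).1, (hvel n).2]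
        field_simp
        ring
      have hDD : -(V 0 * (Real.sin (2 * (n : ℝ) * θ) + Real.cos (2 * (n : ℝ) * θ) * s)) ≠ 0 :=
        neg_ne_zero.mpr (mul_ne_zero hV0' hne)
      have hX1 : X (2 * n + 1) * (Real.sin (2 * n * θ) + Real.cos (2 * n * θ) * s)
          = x 0 * s := by
        rw [hX', hx2n, sub_zero, hD, (hvel n).1, ← hIH, div_div_eq_mul_div]
        field_simp [hDD]
        ring
      have e2 : 2 * (n + 1) = 2 * n + 2 := by omega
      have hres := hsecond n (by omega) hx' hX1
      constructor
      · rw [e2]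
        push_cast
        have : (2 * ((n : ℝ) + 1)) * θ = (2 * n + 2) * θ := by ring
        rw [this]
        exact hres
      · exact (hBWpos (n + 1) (by omega) (by omega)).2
  -- conclude
  obtain ⟨hXk, -⟩ := hpos k hk le_rfl
  have hskne : Real.sin (2 * (k : ℝ) * θ) ≠ 0 := by
    have := hsin (2 * k) (by omega) (by omega)
    push_cast at this
    exact this
  have habs : |X (2 * k)| * |Real.sin (2 * (k : ℝ) * θ)| = s * |x 0| := by
    rw [← abs_mul, hXk, abs_mul, abs_of_nonneg hs0.le]
    ring
  calc s * |x 0| = |X (2 * k)| * |Real.sin (2 * (k : ℝ) * θ)| := habs.symm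
    _ ≤ |X (2 * k)| * 1 := by
        gcongr
        exact abs_le.mpr ⟨Real.neg_one_le_sin _, Real.sin_le_one _⟩
    _ = |X (2 * k)| := mul_one _
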